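/- arXiv:2106.09074 — 2 statements merged into one kernel-verified Lean document; each statement's English description precedes it below -/
import Mathlib

section
/- Let Ω be partitioned into two Lipschitz subdomains Ωᴾ and Ωᴱ with interface Σ = ∂Ωᴾ ∩ ∂Ωᴱ, and let μᴾ, μᴱ > 0, λᴾ, λᴱ ≥ 0, α ≥ 0, c₀ ≥ 0, κ, ξ > 0. Define the interface multilinear form B_I on (H × V × Qᴾ)², where H = L²(Ωᴾ)^m × L²(Ωᴾ) × L²(Ωᴱ)^m × L²(Ωᴱ), V = H¹₀(Ω)^d, Qᴾ = H¹(Ωᴾ). Then for the choice of test function (ω⃗, −u, −p) one has B_I((ω⃗,u,pᴾ),(ω⃗,−u,−pᴾ)) = ‖ωᴱ‖²_{0,Ωᴱ} + (2μᴱ+λᴱ)⁻¹‖pᴱ‖²_{0,Ωᴱ} + ‖ωᴾ‖²_{0,Ωᴾ} + (2μᴾ+λᴾ)⁻¹‖φᴾ‖²_{0,Ωᴾ} − 2α(2μᴾ+λᴾ)⁻¹(pᴾ,φᴾ)_{0,Ωᴾ} + (c₀ + α²(2μᴾ+λᴾ)⁻¹)‖pᴾ‖²_{0,Ωᴾ}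 + ‖(κ/ξ)^{1/2}∇pᴾ‖²_{0,Ωᴾ}, and this quantity is nonnegative. -/
open scoped RealInnerProductSpace

/-- evaluating the interface multilinear form B_I at the test function
(ω⃗, −u, −pᴾ) gives the stated sum of squared norms minus the total-pressure cross term,
and this quantity is nonnegative. -/
theorem stmt11
    {Wp Lp We Le V Qp G : Type*}
    [NormedAddCommGroup Wp] [InnerProductSpace ℝ Wp]
    [NormedAddCommGroup Lp] [InnerProductSpace ℝ Lp]
    [NormedAddCommGroup We] [InnerProductSpace ℝ We]
    [NormedAddCommGroup Le] [InnerProductSpace ℝ Le]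
    [NormedAddCommGroup V] [InnerProductSpace ℝ V]
    [NormedAddCommGroup Qp] [InnerProductSpace ℝ Qp]
    [NormedAddCommGroup G] [InnerProductSpace ℝ G]
    (curlP : V →ₗ[ℝ] Wp) (divP : V →ₗ[ℝ] Lp)
    (curlE : V →ₗ[ℝ] We) (divE : V →ₗ[ℝ] Le)
    (ι : Qp →ₗ[ℝ] Lp) (gw : Qp →ₗ[ℝ] G)
    (μP lamP μE lamE α c0 κ ξ : ℝ)
    (hμP : 0 < μP) (hlamP : 0 ≤ lamP) (hμE : 0 < μE) (hlamE : 0 ≤ lamE)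
    (hα : 0 ≤ α) (hc0 : 0 ≤ c0) (hκ : 0 < κ) (hξ : 0 < ξ)
    (ωP : Wp) (φP : Lp) (ωE : We) (pE : Le) (u : V) (p : Qp) :
    ((⟪ωP, ωP⟫ + (2 * μP + lamP)⁻¹ * ⟪φP, φP⟫
        + ⟪ωE, ωE⟫ + (2 * μE + lamE)⁻¹ * ⟪pE, pE⟫)
      + (-Real.sqrt μP * ⟪ωP, curlP u⟫ + ⟪φP, divP u⟫
          - Real.sqrt μE * ⟪ωE, curlE u⟫ + ⟪pE, divE u⟫)
      - α / (2 * μP + lamP) * ⟪ι p, φP⟫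
      + (-Real.sqrt μP * ⟪ωP, curlP (-u)⟫ + ⟪φP, divP (-u)⟫
          - Real.sqrt μE * ⟪ωE, curlE (-u)⟫ + ⟪pE, divE (-u)⟫)
      + α / (2 * μP + lamP) * ⟪ι (-p), φP⟫
      - ((c0 + α ^ 2 / (2 * μP + lamP)) * ⟪ι p, ι (-p)⟫ + ⟪gw p, gw (-p)⟫)
      = ‖ωE‖ ^ 2 + (2 * μE + lamE)⁻¹ * ‖pE‖ ^ 2
        + ‖ωP‖ ^ 2 + (2 * μP + lamP)⁻¹ * ‖φP‖ ^ 2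
        - 2 * α * (2 * μP + lamP)⁻¹ * ⟪ι p, φP⟫
        + (c0 + α ^ 2 / (2 * μP + lamP)) * ‖ι p‖ ^ 2 + ‖gw p‖ ^ 2) ∧
    0 ≤ ‖ωE‖ ^ 2 + (2 * μE + lamE)⁻¹ * ‖pE‖ ^ 2
        + ‖ωP‖ ^ 2 + (2 * μP + lamP)⁻¹ * ‖φP‖ ^ 2
        - 2 * α * (2 * μP + lamP)⁻¹ * ⟪ι p, φP⟫
        + (c0 + α ^ 2 / (2 * μP + lamP)) * ‖ι p‖ ^ 2 + ‖gw p‖ ^ 2 := by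
  have hP : 0 < 2 * μP + lamP := by linarith
  constructor
  · simp only [map_neg, inner_neg_left, inner_neg_right, real_inner_self_eq_norm_sq]
    field_simp
    ring
  · have key : (2 * μP + lamP)⁻¹ * ‖φP‖ ^ 2
        - 2 * α * (2 * μP + lamP)⁻¹ * ⟪ι p, φP⟫
        + α ^ 2 / (2 * μP + lamP) * ‖ι p‖ ^ 2
        = (2 * μP + lamP)⁻¹ * ‖φP - α • ι p‖ ^ 2 := by
      rw [@norm_sub_sq_real, norm_smul, inner_smul_right, real_inner_comm]
      simp [Real.norm_eq_abs, abs_mul_abs_self, mul_pow]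
      field_simp
    have h1 : 0 ≤ (2 * μE + lamE)⁻¹ * ‖pE‖ ^ 2 := by positivity
    have h2 : 0 ≤ (2 * μP + lamP)⁻¹ * ‖φP - α • ι p‖ ^ 2 := by positivity
    have h3 : 0 ≤ c0 * ‖ι p‖ ^ 2 := by positivity
    nlinarith [sq_nonneg ‖ωE‖, sq_nonneg ‖ωP‖, sq_nonneg ‖gw p‖]
end

section
/- Let K be a simplex with diameter h_K, b_K the interior bubble function on K (product of barycentric coordinates, scaled to max 1), and suppose for all polynomials v of degree ≤ r on K the inverse estimates ‖v‖_{0,K} ≲ ‖b_K^{1/2}v‖_{0,K}, ‖b_K v‖_{0,K} ≲ ‖v‖_{0,K}, ‖∇(b_K v)‖_{0,K} ≲ h_K⁻¹‖v‖_{0,K} hold. Let μ > 0, let ω, ω_h, p, p_h, f, f_h be (vector/scalar) fields on K with f − √μ curl ω − ∇p = 0 in K, where ω_h, p_h, f_h are polynomials. Then the residual R₁ := f_h − √μ curl ω_h − ∇p_h satisfies h_K μ^{-1/2}‖R₁‖_{0,K} ≲ μ^{-1/2} h_K ‖f − f_h‖_{0,K} + μ^{-1/2}‖p − p_h‖_{0,K}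 + ‖ω − ω_h‖_{0,K}, with hidden constant depending only on shape regularity and polynomial degree. -/
open scoped RealInnerProductSpace

/-- Lemma 2.3: bubble-function efficiency bound for the momentum residual
R₁ = f_h − √μ curl ω_h − ∇p_h. `P` is the space of (vector-valued) polynomials of degree
≤ r on the element K, `bub` is multiplication by the interior bubble b_K, `gradNorm`
bounds the norm of the gradient, `curlT`/`divT` are the curl/divergence of vector fields
(with the integration-by-parts identities valid since bub v vanishes on ∂K), and the
three listed inverse estimates hold with constant C₀.  The hidden constant C depends
only on shape regularity and polynomial degree (i.e. on C₀), not on the fields. -/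
theorem stmt16
    {Vec Rot Sca Qsp : Type*}
    [NormedAddCommGroup Vec] [InnerProductSpace ℝ Vec]
    [NormedAddCommGroup Rot] [InnerProductSpace ℝ Rot]
    [NormedAddCommGroup Sca] [InnerProductSpace ℝ Sca]
    [AddCommGroup Qsp] [Module ℝ Qsp]
    (curl : Rot →ₗ[ℝ] Vec) (grad : Qsp →ₗ[ℝ] Vec) (ιQ : Qsp →ₗ[ℝ] Sca)
    (curlT : Vec →ₗ[ℝ] Rot) (divT : Vec →ₗ[ℝ] Sca)
    (gradNorm : Vec → ℝ) (bub : Vec →ₗ[ℝ] Vec) (P : Submodule ℝ Vec)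
    (hK μ C₀ : ℝ) (hhK : 0 < hK) (hμ : 0 < μ) (hC₀ : 0 < C₀)
    (hinv1 : ∀ v ∈ P, ‖v‖ ^ 2 ≤ C₀ * ⟪v, bub v⟫)
    (hinv2 : ∀ v ∈ P, ‖bub v‖ ≤ C₀ * ‖v‖)
    (hinv3 : ∀ v ∈ P, gradNorm (bub v) ≤ C₀ * hK⁻¹ * ‖v‖)
    (hcurlbd : ∀ z : Vec, ‖curlT z‖ ≤ gradNorm z)
    (hdivbd : ∀ z : Vec, ‖divT z‖ ≤ gradNorm z)
    (hIBPcurl : ∀ (θ : Rot), ∀ v ∈ P, ⟪curl θ, bub v⟫ = ⟪θ, curlT (bub v)⟫)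
    (hIBPgrad : ∀ (s : Qsp), ∀ v ∈ P, ⟪grad s, bub v⟫ = -⟪ιQ s, divT (bub v)⟫) :
    ∃ C > (0 : ℝ), ∀ (ω ωh : Rot) (p ph : Qsp) (f fh : Vec),
      f - Real.sqrt μ • curl ω - grad p = 0 →
      (fh - Real.sqrt μ • curl ωh - grad ph) ∈ P →
      hK * (Real.sqrt μ)⁻¹ * ‖fh - Real.sqrt μ • curl ωh - grad ph‖
        ≤ C * ((Real.sqrt μ)⁻¹ * hK * ‖f - fh‖
            + (Real.sqrt μ)⁻¹ * ‖ιQ (p - ph)‖ + ‖ω - ωh‖) := by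
  refine ⟨C₀ ^ 2, by positivity, ?_⟩
  intro ω ωh p ph f fh heq hP
  set R := fh - Real.sqrt μ • curl ωh - grad ph with hRdef
  have hsμ : 0 < Real.sqrt μ := Real.sqrt_pos.mpr hμ
  have hf : f = Real.sqrt μ • curl ω + grad p := by
    have h1 : f - Real.sqrt μ • curl ω = grad p := sub_eq_zero.mp heq
    rw [← h1]; abel
  have hRrep : R = (fh - f) + Real.sqrt μ • curl (ω - ωh) + grad (p - ph) := by
    rw [hRdef, hf, map_sub, map_sub, smul_sub]; abel
  have hexp : ⟪R, bub R⟫ = ⟪fh - f, bub R⟫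
      + Real.sqrt μ * ⟪ω - ωh, curlT (bub R)⟫ + -⟪ιQ (p - ph), divT (bub R)⟫ := by
    calc ⟪R, bub R⟫
        = ⟪(fh - f) + Real.sqrt μ • curl (ω - ωh) + grad (p - ph), bub R⟫ := by
          rw [← hRrep]
      _ = _ := by
          rw [inner_add_left, inner_add_left, real_inner_smul_left,
            hIBPcurl _ R hP, hIBPgrad _ R hP]
  have t1 : ⟪fh - f, bub R⟫ ≤ ‖f - fh‖ * (C₀ * ‖R‖) := by
    calc ⟪fh - f, bub R⟫ ≤ ‖fh - f‖ * ‖bub R‖ := real_inner_le_norm _ _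
      _ ≤ ‖f - fh‖ * (C₀ * ‖R‖) := by
          rw [norm_sub_rev]
          exact mul_le_mul_of_nonneg_left (hinv2 R hP) (norm_nonneg _)
  have hgb : ‖curlT (bub R)‖ ≤ C₀ * hK⁻¹ * ‖R‖ := (hcurlbd _).trans (hinv3 R hP)
  have hdb : ‖divT (bub R)‖ ≤ C₀ * hK⁻¹ * ‖R‖ := (hdivbd _).trans (hinv3 R hP)
  have t2 : ⟪ω - ωh, curlT (bub R)⟫ ≤ ‖ω - ωh‖ * (C₀ * hK⁻¹ * ‖R‖) := by
    calc ⟪ω - ωh, curlT (bub R)⟫ ≤ ‖ω - ωh‖ * ‖curlT (bub R)‖ := real_inner_le_norm _ _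
      _ ≤ _ := mul_le_mul_of_nonneg_left hgb (norm_nonneg _)
  have t3 : -⟪ιQ (p - ph), divT (bub R)⟫ ≤ ‖ιQ (p - ph)‖ * (C₀ * hK⁻¹ * ‖R‖) := by
    calc -⟪ιQ (p - ph), divT (bub R)⟫ ≤ |⟪ιQ (p - ph), divT (bub R)⟫| := neg_le_abs _
      _ ≤ ‖ιQ (p - ph)‖ * ‖divT (bub R)‖ := abs_real_inner_le_norm _ _
      _ ≤ _ := mul_le_mul_of_nonneg_left hdb (norm_nonneg _)
  have hsq : ‖R‖ ^ 2 ≤ C₀ * ⟪R, bub R⟫ := hinv1 R hP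
  set S : ℝ := ‖f - fh‖ + Real.sqrt μ * (hK⁻¹ * ‖ω - ωh‖) + hK⁻¹ * ‖ιQ (p - ph)‖
    with hSdef
  have key : ‖R‖ ^ 2 ≤ C₀ ^ 2 * ‖R‖ * S := by
    have t2' : Real.sqrt μ * ⟪ω - ωh, curlT (bub R)⟫
        ≤ Real.sqrt μ * (‖ω - ωh‖ * (C₀ * hK⁻¹ * ‖R‖)) :=
      mul_le_mul_of_nonneg_left t2 hsμ.le
    have := hsq.trans (by
      have : ⟪R, bub R⟫ ≤ ‖f - fh‖ * (C₀ * ‖R‖)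
          + Real.sqrt μ * (‖ω - ωh‖ * (C₀ * hK⁻¹ * ‖R‖))
          + ‖ιQ (p - ph)‖ * (C₀ * hK⁻¹ * ‖R‖) := by
        rw [hexp]; exact add_le_add (add_le_add t1 t2') t3
      exact mul_le_mul_of_nonneg_left this hC₀.le)
    rw [hSdef]; ring_nf; ring_nf at this; linarith
  have hRbd : ‖R‖ ≤ C₀ ^ 2 * S := by
    rcases eq_or_lt_of_le (norm_nonneg R) with h0 | h0
    · have hS : 0 ≤ S := by
        rw [hSdef]; positivity
      nlinarith
    · nlinarith
  calc hK * (Real.sqrt μ)⁻¹ * ‖R‖ ≤ hK * (Real.sqrt μ)⁻¹ * (C₀ ^ 2 * S) := by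
        exact mul_le_mul_of_nonneg_left hRbd (by positivity)
    _ = C₀ ^ 2 * ((Real.sqrt μ)⁻¹ * hK * ‖f - fh‖
          + (Real.sqrt μ)⁻¹ * ‖ιQ (p - ph)‖ + ‖ω - ωh‖) := by
        rw [hSdef]; field_simp; ring
end
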